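/- Let n ≥ 3 and A₁, A₂, A₃ be real symmetric n×n matrices with s₁A₁ + s₂A₂ + s₃A₃ positive definite for some s ∈ ℝ³. Then the cone Ω = {(xᵀA₁x, xᵀA₂x, xᵀA₃x) : x ∈ ℝⁿ} is acute, i.e., there is no nonzero y ∈ ℝ³ with both y ∈ Ω and −y ∈ Ω. -/

import Mathlib

open Matrix

theorem polyak_acuteness (n : ℕ) (hn : 3 ≤ n)
    (A₁ A₂ A₃ : Matrix (Fin n) (Fin n) ℝ)
    (h₁ : A₁.IsSymm) (h₂ : A₂.IsSymm) (h₃ : A₃.IsSymm)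
    (hs : ∃ s : Fin 3 → ℝ, (s 0 • A₁ + s 1 • A₂ + s 2 • A₃).PosDef) :
    ¬ ∃ y : Fin 3 → ℝ, y ≠ 0 ∧
      y ∈ {y : Fin 3 → ℝ | ∃ x : Fin n → ℝ,
        y = ![x ⬝ᵥ A₁ *ᵥ x, x ⬝ᵥ A₂ *ᵥ x, x ⬝ᵥ A₃ *ᵥ x]} ∧
      -y ∈ {y : Fin 3 → ℝ | ∃ x : Fin n → ℝ,
        y = ![x ⬝ᵥ A₁ *ᵥ x, x ⬝ᵥ A₂ *ᵥ x, x ⬝ᵥ A₃ *ᵥ x]} := by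
  rintro ⟨y, hy0, ⟨x, hx⟩, ⟨z, hz⟩⟩
  obtain ⟨s, hpd⟩ := hs
  have hxne : x ≠ 0 := by
    rintro rfl
    apply hy0
    rw [hx]
    funext i
    fin_cases i <;> simp
  have hzne : z ≠ 0 := by
    rintro rfl
    apply hy0
    have : -y = 0 := by
      rw [hz]; funext i; fin_cases i <;> simp
    simpa using congrArg Neg.neg this
  have key : ∀ w : Fin n → ℝ,
      w ⬝ᵥ (s 0 • A₁ + s 1 • A₂ + s 2 • A₃) *ᵥ w
        = s 0 * (w ⬝ᵥ A₁ *ᵥ w) + s 1 * (w ⬝ᵥ A₂ *ᵥ w) + s 2 * (w ⬝ᵥ A₃ *ᵥ w) := by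
    intro w
    simp [add_mulVec, smul_mulVec, dotProduct_add, dotProduct_smul, smul_eq_mul]
  have hx' : 0 < x ⬝ᵥ (s 0 • A₁ + s 1 • A₂ + s 2 • A₃) *ᵥ x := by
    have := hpd.dotProduct_mulVec_pos hxne; simpa using this
  have hz' : 0 < z ⬝ᵥ (s 0 • A₁ + s 1 • A₂ + s 2 • A₃) *ᵥ z := by
    have := hpd.dotProduct_mulVec_pos hzne; simpa using this
  rw [key] at hx' hz'
  have ex : ∀ i, y i = ![x ⬝ᵥ A₁ *ᵥ x, x ⬝ᵥ A₂ *ᵥ x, x ⬝ᵥ A₃ *ᵥ x] i :=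
    fun i => congrFun hx i
  have ez : ∀ i, (-y) i = ![z ⬝ᵥ A₁ *ᵥ z, z ⬝ᵥ A₂ *ᵥ z, z ⬝ᵥ A₃ *ᵥ z] i :=
    fun i => congrFun hz i
  have e0 := ex 0; have e1 := ex 1; have e2 := ex 2
  have f0 := ez 0; have f1 := ez 1; have f2 := ez 2
  simp only [Matrix.cons_val_zero, Matrix.cons_val_one, Matrix.head_cons,
    Matrix.cons_val_two, Matrix.tail_cons, Pi.neg_apply] at e0 e1 e2 f0 f1 f2
  rw [← e0, ← e1, ← e2] at hx'
  rw [← f0, ← f1, ← f2] at hz'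
  nlinarith [hx', hz']
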